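/- Let (F,W) be a mixed Hodge structure on V with Deligne bigrading {I^{p,q}}, and let λ ∈ Λ^{−1,−1}_{(F,W)}. Then (e^{λ}·F, W), where (e^{λ}·F)^p = e^{λ}(F^p), is a mixed Hodge structure, its Deligne bigrading is {e^{λ}(I^{p,q})}, and consequently its Deligne grading is Y_{(e^{λ}·F,W)} = e^{λ} Y_{(F,W)} e^{−λ}. -/

import Mathlib

/-- A finite increasing filtration of `V` indexed by `ℤ`. -/
def FinIncrFil {V : Type*} [AddCommGroup V] [Module ℂ V] (W : ℤ → Submodule ℂ V) : Prop :=
  Monotone W ∧ (∃ a : ℤ, W a = ⊥) ∧ (∃ b : ℤ, W b = ⊤)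

/-- A finite decreasing filtration of `V` indexed by `ℤ`. -/
def FinDecrFil {V : Type*} [AddCommGroup V] [Module ℂ V] (F : ℤ → Submodule ℂ V) : Prop :=
  Antitone F ∧ (∃ a : ℤ, F a = ⊤) ∧ (∃ b : ℤ, F b = ⊥)

/-- `σ` is a conjugation: a conjugate-linear involution of the complex vector space `V`
(realizing `V` as the complexification of its fixed set `V_ℝ`). -/
def IsConjugation {V : Type*} [AddCommGroup V] [Module ℂ V] (σ : V →ₗ[ℝ] V) : Prop :=
  (∀ v, σ (σ v) = v) ∧ ∀ (c : ℂ) (v : V), σ (c • v) = (starRingEnd ℂ) c • σ v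

/-- `(F, W)` is a mixed Hodge structure on `V` with respect to the conjugation `σ`:
`W` is a finite increasing σ-stable filtration, `F` a finite decreasing filtration,
and for every `k`, `Gr^W_k = F^p Gr^W_k ⊕ σ(F^{k-p+1} Gr^W_k)` for all `p`
(expressed elementwise on representatives). -/
def IsMHS {V : Type*} [AddCommGroup V] [Module ℂ V] (σ : V →ₗ[ℝ] V)
    (F W : ℤ → Submodule ℂ V) : Prop :=
  FinIncrFil W ∧ (∀ k : ℤ, ∀ v ∈ W k, σ v ∈ W k) ∧ FinDecrFil F ∧
    ∀ k p : ℤ,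
      (∀ v ∈ W k, ∃ a ∈ F p ⊓ W k, ∃ b ∈ F (k - p + 1) ⊓ W k, v - a - σ b ∈ W (k - 1)) ∧
      (∀ a ∈ F p ⊓ W k, ∀ b ∈ F (k - p + 1) ⊓ W k, a - σ b ∈ W (k - 1) → a ∈ W (k - 1))

/-- A grading of an increasing filtration `W` of a complex vector space: a semisimple
endomorphism with integer eigenvalues with `W i = E_i(Y) ⊕ W (i-1)` for all `i`. -/
def IsGrading {V : Type*} [AddCommGroup V] [Module ℂ V] (W : ℤ → Submodule ℂ V)
    (Y : Module.End ℂ V) : Prop :=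
  (⨆ i : ℤ, Y.eigenspace (i : ℂ)) = ⊤ ∧
    ∀ i : ℤ, W i = Y.eigenspace (i : ℂ) ⊔ W (i - 1) ∧
      Disjoint (Y.eigenspace (i : ℂ)) (W (i - 1))

/-- An endomorphism `X` of `V` is real: `σ X σ = X`. -/
def IsRealEnd {V : Type*} [AddCommGroup V] [Module ℂ V] (σ : V →ₗ[ℝ] V)
    (X : Module.End ℂ V) : Prop :=
  ∀ v, σ (X (σ v)) = X v

/-- `I` is a Deligne bigrading of the mixed Hodge structure `(F, W)`:
`V = ⊕_{p,q} I^{p,q}`, with (a) `F^p = ⊕_{r ≥ p, s} I^{r,s}`,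
(b) `W_k = ⊕_{r+s ≤ k} I^{r,s}`, and
(c) `σ(I^{p,q}) ⊆ I^{q,p} + ⊕_{r<q, s<p} I^{r,s}`. -/
def IsDeligneBigrading {V : Type*} [AddCommGroup V] [Module ℂ V] (σ : V →ₗ[ℝ] V)
    (F W : ℤ → Submodule ℂ V) (I : ℤ → ℤ → Submodule ℂ V) : Prop :=
  DirectSum.IsInternal (fun pq : ℤ × ℤ => I pq.1 pq.2) ∧
  (∀ p : ℤ, F p = ⨆ (r : ℤ) (_ : p ≤ r) (s : ℤ), I r s) ∧
  (∀ k : ℤ, W k = ⨆ (r : ℤ) (s : ℤ) (_ : r + s ≤ k), I r s) ∧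
  (∀ p q : ℤ, ∀ v ∈ I p q,
    σ v ∈ I q p ⊔ ⨆ (r : ℤ) (_ : r < q) (s : ℤ) (_ : s < p), I r s)

/-- The endomorphism `Y` acts as multiplication by `p + q` on each `I^{p,q}`
(this characterizes the Deligne grading of a bigraded mixed Hodge structure). -/
def ActsAsDeligneGrading {V : Type*} [AddCommGroup V] [Module ℂ V]
    (I : ℤ → ℤ → Submodule ℂ V) (Y : Module.End ℂ V) : Prop :=
  ∀ p q : ℤ, ∀ v ∈ I p q, Y v = ((p + q : ℤ) : ℂ) • v

/-- The subalgebra `Λ^{-1,-1}_{(F,W)}` relative to a bigrading `I`: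
endomorphisms `X` with `X(I^{p,q}) ⊆ ⊕_{r<p, s<q} I^{r,s}`. -/
def MemLambdaMM {V : Type*} [AddCommGroup V] [Module ℂ V]
    (I : ℤ → ℤ → Submodule ℂ V) (X : Module.End ℂ V) : Prop :=
  ∀ p q : ℤ, ∀ v ∈ I p q, X v ∈ ⨆ (r : ℤ) (_ : r < p) (s : ℤ) (_ : s < q), I r s

/-- The exponential of a nilpotent endomorphism of a finite-dimensional complex vector
space, written as the (finite) sum `Σ_{j ≤ dim V} X^j / j!`. -/
noncomputable def expEnd {V : Type*} [AddCommGroup V] [Module ℂ V] [FiniteDimensional ℂ V]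
    (X : Module.End ℂ V) : Module.End ℂ V :=
  ∑ j ∈ Finset.range (Module.finrank ℂ V + 1), ((j.factorial : ℂ))⁻¹ • X ^ j



section Exp
variable {V : Type*} [AddCommGroup V] [Module ℂ V]
open Module Polynomial Finset

lemma pow_finrank_eq_zero' [FiniteDimensional ℂ V] {f : Module.End ℂ V} (h : IsNilpotent f) :
    f ^ (finrank ℂ V) = 0 := by
  obtain ⟨N, hN⟩ := h
  have h1 := Module.End.ker_pow_le_ker_pow_finrank f N
  rw [hN, LinearMap.ker_zero, top_le_iff] at h1
  exact LinearMap.ker_eq_top.mp h1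

lemma pow_eq_zero_of_finrank_le [FiniteDimensional ℂ V] {f : Module.End ℂ V}
    (h : IsNilpotent f) {m : ℕ} (hm : finrank ℂ V ≤ m) : f ^ m = 0 := by
  rw [← Nat.sub_add_cancel hm, pow_add, pow_finrank_eq_zero' h, mul_zero]

lemma expEnd_mul_expEnd_neg [FiniteDimensional ℂ V] (f : Module.End ℂ V) (hf : IsNilpotent f) :
    expEnd f * expEnd (-f) = 1 := by
  set n := finrank ℂ V with hn
  set P : ℂ[X] := ∑ j ∈ range (n+1), C ((j.factorial : ℂ))⁻¹ * X ^ j with hP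
  set Q : ℂ[X] := ∑ j ∈ range (n+1), C ((-1)^j * (j.factorial : ℂ)⁻¹) * X ^ j with hQ
  have hPcoeff : ∀ i, i < n + 1 → P.coeff i = ((i.factorial : ℂ))⁻¹ := by
    intro i hi
    rw [hP, finset_sum_coeff]
    simp only [coeff_C_mul, coeff_X_pow, mul_ite, mul_one, mul_zero, Finset.sum_ite_eq,
      Finset.mem_range]
    rw [if_pos hi]
  have hQcoeff : ∀ i, i < n + 1 → Q.coeff i = (-1)^i * ((i.factorial : ℂ))⁻¹ := by
    intro i hi
    rw [hQ, finset_sum_coeff]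
    simp only [coeff_C_mul, coeff_X_pow, mul_ite, mul_one, mul_zero, Finset.sum_ite_eq,
      Finset.mem_range]
    rw [if_pos hi]
  have haevalP : (aeval f) P = expEnd f := by
    rw [hP, map_sum, expEnd]
    refine Finset.sum_congr rfl fun j _ => ?_
    rw [map_mul, aeval_C, map_pow, aeval_X, ← Algebra.smul_def]
  have haevalQ : (aeval f) Q = expEnd (-f) := by
    rw [hQ, map_sum, expEnd]
    refine Finset.sum_congr rfl fun j _ => ?_
    rw [map_mul, aeval_C, map_pow, aeval_X, ← Algebra.smul_def, ← neg_one_smul ℂ f, _root_.smul_pow,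
      smul_smul, mul_comm]
  have hdvd : X ^ (n+1) ∣ P * Q - 1 := by
    rw [X_pow_dvd_iff]
    intro m hm
    rw [coeff_sub, coeff_mul, Finset.Nat.sum_antidiagonal_eq_sum_range_succ_mk, coeff_one]
    have key : ∀ j ∈ range (m+1),
        P.coeff j * Q.coeff (m - j)
          = ((m.factorial : ℂ))⁻¹ * ((-1)^(m-j) * (m.choose j : ℂ)) := by
      intro j hj
      rw [mem_range] at hj
      have hjm : j ≤ m := by omega
      rw [hPcoeff j (by omega), hQcoeff (m - j) (by omega)]
      have hcf : ((m.choose j : ℂ)) * (j.factorial : ℂ) * ((m-j).factorial : ℂ)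
          = (m.factorial : ℂ) := by
        exact_mod_cast congrArg (Nat.cast : ℕ → ℂ)
          (Nat.choose_mul_factorial_mul_factorial hjm)
      have f1 : (j.factorial : ℂ) ≠ 0 := Nat.cast_ne_zero.mpr (Nat.factorial_ne_zero j)
      have f2 : ((m - j).factorial : ℂ) ≠ 0 := Nat.cast_ne_zero.mpr (Nat.factorial_ne_zero _)
      have f3 : ((m.factorial : ℂ)) ≠ 0 := Nat.cast_ne_zero.mpr (Nat.factorial_ne_zero m)
      field_simp
      linear_combination (-1 : ℂ) * hcf
    rw [Finset.sum_congr rfl key, ← Finset.mul_sum]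
    have halt : ∑ j ∈ range (m+1), ((-1 : ℂ))^(m-j) * (m.choose j : ℂ)
        = if m = 0 then 1 else 0 := by
      have hre := Finset.sum_range_reflect (fun j => ((-1 : ℂ))^(m-j) * (m.choose j : ℂ)) (m+1)
      rw [← hre]
      have : ∀ j ∈ range (m+1), ((-1:ℂ))^(m-(m+1-1-j)) * (m.choose (m+1-1-j) : ℂ)
          = ((-1:ℂ))^j * (m.choose j : ℂ) := by
        intro j hj
        rw [mem_range] at hj
        have h1 : m + 1 - 1 - j = m - j := by omega
        have h2 : m - (m - j) = j := by omega
        rw [h1, h2, Nat.choose_symm (by omega)]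
      rw [Finset.sum_congr rfl this]
      have := Int.alternating_sum_range_choose (n := m)
      have := congrArg (Int.cast : ℤ → ℂ) this
      push_cast at this
      rw [this]
    rw [halt]
    split_ifs with h
    · subst h; simp
    · simp
  obtain ⟨R, hR⟩ := hdvd
  have hPQ : P * Q = 1 + X ^ (n+1) * R := by linear_combination hR
  calc expEnd f * expEnd (-f) = (aeval f) (P * Q) := by rw [map_mul, haevalP, haevalQ]
  _ = 1 := by
      rw [hPQ, map_add, map_one, map_mul, map_pow, aeval_X,
        pow_eq_zero_of_finrank_le hf (by omega), zero_mul, add_zero]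

end Exp

section Gfam
variable {ι : Type*} {R N : Type*} [Ring R] [AddCommGroup N] [Module R N]

lemma disjoint_biSup_biSup (I : ι → Submodule R N) (hind : iSupIndep I) {A B : Set ι}
    (hAB : Disjoint A B) : Disjoint (⨆ i ∈ A, I i) (⨆ i ∈ B, I i) := by
  classical
  rw [disjoint_iff, eq_bot_iff]
  intro x hx
  rw [Submodule.mem_inf] at hx
  obtain ⟨hxA, hxB⟩ := hx
  rw [Submodule.mem_biSup_iff_exists_dfinsupp] at hxA hxB
  obtain ⟨f, hf⟩ := hxA
  obtain ⟨g, hg⟩ := hxB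
  have hinj := hind.dfinsupp_lsum_injective
  have heq : f.filter (· ∈ A) = g.filter (· ∈ B) := hinj (hf.trans hg.symm)
  have h0 : f.filter (· ∈ A) = 0 := by
    ext i
    have h2 : (f.filter (· ∈ A)) i = (g.filter (· ∈ B)) i := by rw [heq]
    rw [DFinsupp.filter_apply, DFinsupp.filter_apply] at h2
    rw [DFinsupp.filter_apply, DFinsupp.zero_apply]
    by_cases hiA : i ∈ A
    · rw [if_pos hiA]
      rw [if_pos hiA, if_neg (fun hiB => Set.disjoint_left.mp hAB hiA hiB)] at h2
      rw [h2]
    · rw [if_neg hiA]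
  rw [h0] at hf
  simp only [map_zero] at hf
  rw [← hf]
  exact Submodule.zero_mem ⊥

/-- The span of the graded pieces indexed by a set. -/
def Gfam (I : ι → Submodule R N) (A : Set ι) : Submodule R N := ⨆ i ∈ A, I i

lemma le_Gfam (I : ι → Submodule R N) {A : Set ι} {i : ι} (h : i ∈ A) : I i ≤ Gfam I A :=
  le_iSup_of_le i (le_iSup_of_le h le_rfl)

lemma Gfam_le (I : ι → Submodule R N) {A : Set ι} {M : Submodule R N}
    (h : ∀ i ∈ A, I i ≤ M) : Gfam I A ≤ M := iSup₂_le h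

lemma Gfam_mono (I : ι → Submodule R N) {A B : Set ι} (h : A ⊆ B) : Gfam I A ≤ Gfam I B :=
  biSup_mono h

lemma Gfam_union (I : ι → Submodule R N) (A B : Set ι) :
    Gfam I (A ∪ B) = Gfam I A ⊔ Gfam I B := iSup_union

lemma Gfam_inf (I : ι → Submodule R N) (hind : iSupIndep I) (A B : Set ι) :
    Gfam I A ⊓ Gfam I B = Gfam I (A ∩ B) := by
  refine le_antisymm ?_ (le_inf (Gfam_mono I Set.inter_subset_left)
    (Gfam_mono I Set.inter_subset_right))
  have hA : Gfam I A = Gfam I (A ∩ B) ⊔ Gfam I (A \ B) := by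
    rw [← Gfam_union]; exact congrArg (Gfam I) (Set.inter_union_diff A B).symm
  have hd : Gfam I (A \ B) ⊓ Gfam I B = ⊥ :=
    disjoint_iff.mp (disjoint_biSup_biSup I hind Set.disjoint_sdiff_left)
  have hle2 : Gfam I (A ∩ B) ≤ Gfam I B := Gfam_mono I (fun x hx => hx.2)
  have hassoc := sup_inf_assoc_of_le (Gfam I (A \ B)) hle2
  rw [hA, hassoc, hd, sup_bot_eq]

end Gfam

section Split
variable {V : Type*} [AddCommGroup V] [Module ℂ V]

theorem bigrading_splitting (σ : V →ₗ[ℝ] V) (hσ : IsConjugation σ) (F W : ℤ → Submodule ℂ V)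
    (I : ℤ → ℤ → Submodule ℂ V) (hI : IsDeligneBigrading σ F W I) (k p : ℤ) :
    (∀ v ∈ W k, ∃ a ∈ F p ⊓ W k, ∃ b ∈ F (k - p + 1) ⊓ W k, v - a - σ b ∈ W (k - 1)) ∧
    (∀ a ∈ F p ⊓ W k, ∀ b ∈ F (k - p + 1) ⊓ W k, a - σ b ∈ W (k - 1) → a ∈ W (k - 1)) := by
  classical
  obtain ⟨hint, hF, hW, hσI⟩ := hI
  set J : ℤ × ℤ → Submodule ℂ V := fun pq => I pq.1 pq.2 with hJ
  have hind : iSupIndep J := hint.submodule_iSupIndep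
  -- set descriptions
  have hFG : ∀ p' : ℤ, F p' = Gfam J {pq | p' ≤ pq.1} := by
    intro p'
    rw [hF p']
    apply le_antisymm
    · exact iSup_le fun r => iSup_le fun hr => iSup_le fun s => le_Gfam J (A := {pq | p' ≤ pq.1}) (i := (r, s)) hr
    · exact Gfam_le J fun pq hpq =>
        le_iSup_of_le pq.1 (le_iSup_of_le hpq (le_iSup_of_le pq.2 le_rfl))
  have hWG : ∀ j : ℤ, W j = Gfam J {pq | pq.1 + pq.2 ≤ j} := by
    intro j
    rw [hW j]
    apply le_antisymm
    · exact iSup_le fun r => iSup_le fun s => iSup_le fun hrs =>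
        le_Gfam J (A := {pq | pq.1 + pq.2 ≤ j}) (i := (r, s)) hrs
    · exact Gfam_le J fun pq hpq =>
        le_iSup_of_le pq.1 (le_iSup_of_le pq.2 (le_iSup_of_le hpq le_rfl))
  have hSG : ∀ a b : ℤ, (⨆ (r : ℤ) (_ : r < a) (s : ℤ) (_ : s < b), I r s)
      = Gfam J {pq | pq.1 < a ∧ pq.2 < b} := by
    intro a b
    apply le_antisymm
    · exact iSup_le fun r => iSup_le fun hr => iSup_le fun s => iSup_le fun hs =>
        le_Gfam J (A := {pq | pq.1 < a ∧ pq.2 < b}) (i := (r, s)) ⟨hr, hs⟩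
    · exact Gfam_le J fun pq hpq => le_iSup_of_le pq.1 (le_iSup_of_le hpq.1
        (le_iSup_of_le pq.2 (le_iSup_of_le hpq.2 le_rfl)))
  have hWmono : ∀ {i j : ℤ}, i ≤ j → W i ≤ W j := by
    intro i j h
    rw [hWG i, hWG j]
    exact Gfam_mono J fun pq hpq => by simp only [Set.mem_setOf_eq] at hpq ⊢; omega
  -- sigma moves graded pieces
  have hσIG : ∀ (r s : ℤ) (B : Set (ℤ × ℤ)), (s, r) ∈ B →
      ({rs : ℤ × ℤ | rs.1 < s ∧ rs.2 < r} ⊆ B) → ∀ v ∈ I r s, σ v ∈ Gfam J B := by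
    intro r s B h1 h2 v hv
    have h3 := hσI r s v hv
    have hsub : I s r ⊔ (⨆ (r' : ℤ) (_ : r' < s) (s' : ℤ) (_ : s' < r), I r' s') ≤ Gfam J B :=
      sup_le (le_Gfam J h1) ((hSG s r) ▸ Gfam_mono J h2)
    exact hsub h3
  have hσGG : ∀ (A B : Set (ℤ × ℤ)),
      (∀ pq ∈ A, ((pq.2, pq.1) ∈ B ∧ ∀ rs : ℤ × ℤ, rs.1 < pq.2 → rs.2 < pq.1 → rs ∈ B)) →
      ∀ v ∈ Gfam J A, σ v ∈ Gfam J B := by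
    intro A B h v hv
    let T : Submodule ℂ V :=
      { carrier := {w | σ w ∈ Gfam J B}
        add_mem' := fun {x y} hx hy => by
          simp only [Set.mem_setOf_eq, map_add] at *
          exact add_mem hx hy
        zero_mem' := by simp only [Set.mem_setOf_eq, map_zero]; exact zero_mem _
        smul_mem' := fun c x hx => by
          simp only [Set.mem_setOf_eq, hσ.2] at *
          exact Submodule.smul_mem _ _ hx }
    have hle : Gfam J A ≤ T := by
      apply Gfam_le
      rintro ⟨r, s⟩ hrs w hw
      exact hσIG r s B (h _ hrs).1 (fun rs hrs' => (h _ hrs).2 rs hrs'.1 hrs'.2) w hw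
    exact hle hv
  have hσW : ∀ j : ℤ, ∀ v ∈ W j, σ v ∈ W j := by
    intro j v hv
    rw [hWG j] at hv ⊢
    refine hσGG _ _ ?_ v hv
    rintro ⟨r, s⟩ hpq
    simp only [Set.mem_setOf_eq] at hpq
    exact ⟨by simp only [Set.mem_setOf_eq]; omega,
      fun rs h1 h2 => by simp only [Set.mem_setOf_eq]; omega⟩
  constructor
  · -- existence part
    intro v hv
    let T : Submodule ℂ V :=
      { carrier := {w | ∃ a ∈ F p ⊓ W k, ∃ b ∈ F (k - p + 1) ⊓ W k, w - a - σ b ∈ W (k - 1)}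
        add_mem' := by
          rintro v₁ v₂ ⟨a₁, ha₁, b₁, hb₁, h₁⟩ ⟨a₂, ha₂, b₂, hb₂, h₂⟩
          refine ⟨a₁ + a₂, add_mem ha₁ ha₂, b₁ + b₂, add_mem hb₁ hb₂, ?_⟩
          have heq : v₁ + v₂ - (a₁ + a₂) - σ (b₁ + b₂)
              = (v₁ - a₁ - σ b₁) + (v₂ - a₂ - σ b₂) := by
            rw [map_add]; abel
          rw [heq]; exact add_mem h₁ h₂
        zero_mem' := ⟨0, zero_mem _, 0, zero_mem _, by
          simp only [map_zero, sub_zero, sub_self]; exact zero_mem _⟩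
        smul_mem' := by
          rintro c v ⟨a, ha, b, hb, h⟩
          refine ⟨c • a, Submodule.smul_mem _ c ha,
            (starRingEnd ℂ) c • b, Submodule.smul_mem _ _ hb, ?_⟩
          have heq : c • v - c • a - σ ((starRingEnd ℂ) c • b) = c • (v - a - σ b) := by
            rw [hσ.2, Complex.conj_conj, smul_sub, smul_sub]
          rw [heq]; exact Submodule.smul_mem _ _ h }
    suffices hWT : W k ≤ T from hWT hv
    rw [hWG k]
    apply Gfam_le
    rintro ⟨r, s⟩ hrs w hw
    show ∃ a ∈ F p ⊓ W k, ∃ b ∈ F (k - p + 1) ⊓ W k, w - a - σ b ∈ W (k - 1)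
    simp only [Set.mem_setOf_eq] at hrs
    by_cases h1 : r + s ≤ k - 1
    · refine ⟨0, zero_mem _, 0, zero_mem _, ?_⟩
      have hwk : w ∈ W (k - 1) := by
        rw [hWG (k - 1)]
        exact le_Gfam J (A := {pq | pq.1 + pq.2 ≤ k - 1}) (i := (r, s)) h1 hw
      simpa only [map_zero, sub_zero] using hwk
    · have hrs' : r + s = k := by omega
      by_cases h2 : p ≤ r
      · refine ⟨w, ⟨?_, ?_⟩, 0, zero_mem _, ?_⟩
        · rw [hFG p]; exact le_Gfam J (A := {pq | p ≤ pq.1}) (i := (r, s)) h2 hw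
        · rw [hWG k]; exact le_Gfam J (A := {pq | pq.1 + pq.2 ≤ k}) (i := (r, s)) hrs hw
        · simp only [map_zero, sub_zero, sub_self]; exact zero_mem _
      · have hσw := hσI r s w hw
        obtain ⟨b, hb, c, hc, hbc⟩ := Submodule.mem_sup.mp hσw
        refine ⟨0, zero_mem _, b, ⟨?_, ?_⟩, ?_⟩
        · rw [hFG (k - p + 1)]
          exact le_Gfam J (A := {pq | k - p + 1 ≤ pq.1}) (i := (s, r)) (by
            simp only [Set.mem_setOf_eq]; omega) hb
        · rw [hWG k]
          exact le_Gfam J (A := {pq | pq.1 + pq.2 ≤ k}) (i := (s, r)) (by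
            simp only [Set.mem_setOf_eq]; omega) hb
        · have hσb : σ b = w - σ c := by
            have hb' : b = σ w - c := by rw [← hbc]; abel
            rw [hb', map_sub, hσ.1]
          have hcW : c ∈ W (k - 1) := by
            have hc2 : c ∈ Gfam J {pq | pq.1 < s ∧ pq.2 < r} := (hSG s r) ▸ hc
            rw [hWG (k - 1)]
            refine Gfam_mono J ?_ hc2
            intro pq hpq
            simp only [Set.mem_setOf_eq] at hpq ⊢
            omega
          have hσc : σ c ∈ W (k - 1) := hσW (k - 1) c hcW
          have heq : w - 0 - σ b = σ c := by rw [hσb]; abel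
          rw [heq]; exact hσc
  · -- uniqueness part
    intro a ha b hb hab
    have haG : a ∈ Gfam J ({pq | p ≤ pq.1 ∧ pq.1 + pq.2 = k} ∪ {pq | pq.1 + pq.2 ≤ k - 1}) := by
      have ha' : a ∈ Gfam J {pq | p ≤ pq.1} ⊓ Gfam J {pq | pq.1 + pq.2 ≤ k} := by
        rwa [← hFG, ← hWG]
      rw [Gfam_inf J hind] at ha'
      refine Gfam_mono J ?_ ha'
      intro pq hpq
      simp only [Set.mem_inter_iff, Set.mem_setOf_eq, Set.mem_union] at hpq ⊢
      omega
    have hbG : σ b ∈ Gfam J ({pq | pq.1 < p ∧ pq.1 + pq.2 = k} ∪ {pq | pq.1 + pq.2 ≤ k - 1}) := by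
      have hb' : b ∈ Gfam J ({pq | k - p + 1 ≤ pq.1} ∩ {pq | pq.1 + pq.2 ≤ k}) := by
        rw [← Gfam_inf J hind, ← hFG, ← hWG]; exact hb
      refine hσGG _ _ ?_ b hb'
      rintro ⟨u, w⟩ hpq
      simp only [Set.mem_inter_iff, Set.mem_setOf_eq] at hpq
      constructor
      · simp only [Set.mem_union, Set.mem_setOf_eq]; omega
      · intro rs h1 h2
        simp only [Set.mem_union, Set.mem_setOf_eq] at h1 h2 ⊢
        omega
    have habG : a - σ b ∈ Gfam J {pq | pq.1 + pq.2 ≤ k - 1} := by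
      rw [hWG (k - 1)] at hab; exact hab
    have haG2 : a ∈ Gfam J ({pq | pq.1 < p ∧ pq.1 + pq.2 = k} ∪ {pq | pq.1 + pq.2 ≤ k - 1}) := by
      have heq : a = (a - σ b) + σ b := by abel
      rw [heq]
      exact add_mem (Gfam_mono J Set.subset_union_right habG) hbG
    have hfin : a ∈ Gfam J (({pq | p ≤ pq.1 ∧ pq.1 + pq.2 = k} ∪ {pq | pq.1 + pq.2 ≤ k - 1})
        ∩ ({pq | pq.1 < p ∧ pq.1 + pq.2 = k} ∪ {pq | pq.1 + pq.2 ≤ k - 1})) := by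
      rw [← Gfam_inf J hind]; exact ⟨haG, haG2⟩
    have hset : (({pq : ℤ × ℤ | p ≤ pq.1 ∧ pq.1 + pq.2 = k} ∪ {pq | pq.1 + pq.2 ≤ k - 1})
        ∩ ({pq | pq.1 < p ∧ pq.1 + pq.2 = k} ∪ {pq | pq.1 + pq.2 ≤ k - 1}))
        = {pq : ℤ × ℤ | pq.1 + pq.2 ≤ k - 1} := by
      ext pq
      simp only [Set.mem_inter_iff, Set.mem_union, Set.mem_setOf_eq]
      omega
    rw [hset] at hfin
    rw [hWG (k - 1)]
    exact hfin

end Split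

/-- for a mixed Hodge structure `(F, W)` with Deligne bigrading `I` and
`λ ∈ Λ^{-1,-1}_{(F,W)}`, the pair `(e^λ F, W)` is a mixed Hodge structure, its Deligne
bigrading is `e^λ (I^{p,q})`, and its Deligne grading is `e^λ Y_{(F,W)} e^{-λ}`. -/
theorem zero_loci_stmt9 {V : Type*} [AddCommGroup V] [Module ℂ V] [FiniteDimensional ℂ V]
    (σ : V →ₗ[ℝ] V) (hσ : IsConjugation σ)
    (F W : ℤ → Submodule ℂ V) (hFW : IsMHS σ F W)
    (I : ℤ → ℤ → Submodule ℂ V) (hI : IsDeligneBigrading σ F W I)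
    (lam : Module.End ℂ V) (hlam : MemLambdaMM I lam) :
    IsMHS σ (fun p => (F p).map (expEnd lam)) W ∧
    IsDeligneBigrading σ (fun p => (F p).map (expEnd lam)) W
      (fun p q => (I p q).map (expEnd lam)) ∧
    ∀ Y : Module.End ℂ V, ActsAsDeligneGrading I Y →
      ActsAsDeligneGrading (fun p q => (I p q).map (expEnd lam))
        (expEnd lam * Y * expEnd (-lam)) := by
  classical
  obtain ⟨hint, hF, hW, hσI⟩ := hI
  -- basic iSup facts about the "strictly lower" spans
  have hSle : ∀ (a b : ℤ) (M : Submodule ℂ V), (∀ r < a, ∀ s < b, I r s ≤ M) →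
      (⨆ (r : ℤ) (_ : r < a) (s : ℤ) (_ : s < b), I r s) ≤ M := fun a b M h =>
    iSup_le fun r => iSup_le fun hr => iSup_le fun s => iSup_le fun hs => h r hr s hs
  have hISle : ∀ {r a s b : ℤ}, r < a → s < b →
      I r s ≤ ⨆ (r' : ℤ) (_ : r' < a) (s' : ℤ) (_ : s' < b), I r' s' := fun hr hs =>
    le_iSup_of_le _ (le_iSup_of_le hr (le_iSup_of_le _ (le_iSup_of_le hs le_rfl)))
  have hIW : ∀ {r s k : ℤ}, r + s ≤ k → I r s ≤ W k := by
    intro r s k h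
    rw [hW k]
    exact le_iSup_of_le r (le_iSup_of_le s (le_iSup_of_le h le_rfl))
  have hSSW : ∀ (a b k : ℤ), a + b - 2 ≤ k →
      (⨆ (r : ℤ) (_ : r < a) (s : ℤ) (_ : s < b), I r s) ≤ W k := fun a b k h =>
    hSle a b _ fun r hr s hs => hIW (by omega)
  have hSSmono : ∀ {a b a' b' : ℤ}, a ≤ a' → b ≤ b' →
      (⨆ (r : ℤ) (_ : r < a) (s : ℤ) (_ : s < b), I r s)
        ≤ ⨆ (r : ℤ) (_ : r < a') (s : ℤ) (_ : s < b'), I r s := fun ha hb =>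
    hSle _ _ _ fun r hr s hs => hISle (by omega) (by omega)
  -- lam stability facts
  have hlamSS : ∀ (a b : ℤ), ∀ v ∈ (⨆ (r : ℤ) (_ : r < a) (s : ℤ) (_ : s < b), I r s),
      lam v ∈ ⨆ (r : ℤ) (_ : r < a) (s : ℤ) (_ : s < b), I r s := by
    intro a b
    suffices h : (⨆ (r : ℤ) (_ : r < a) (s : ℤ) (_ : s < b), I r s)
        ≤ Submodule.comap lam (⨆ (r : ℤ) (_ : r < a) (s : ℤ) (_ : s < b), I r s) from
      fun v hv => h hv
    refine hSle a b _ fun r hr s hs v hv => ?_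
    exact hSSmono (by omega) (by omega) (hlam r s v hv)
  have hlamsup : ∀ (a b : ℤ), ∀ v ∈ I a b ⊔ (⨆ (r : ℤ) (_ : r < a) (s : ℤ) (_ : s < b), I r s),
      lam v ∈ I a b ⊔ (⨆ (r : ℤ) (_ : r < a) (s : ℤ) (_ : s < b), I r s) := by
    intro a b
    suffices h : I a b ⊔ (⨆ (r : ℤ) (_ : r < a) (s : ℤ) (_ : s < b), I r s)
        ≤ Submodule.comap lam (I a b ⊔ (⨆ (r : ℤ) (_ : r < a) (s : ℤ) (_ : s < b), I r s)) from
      fun v hv => h hv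
    refine sup_le (fun v hv => ?_) (fun v hv => ?_)
    · exact Submodule.mem_sup_right (hlam a b v hv)
    · exact Submodule.mem_sup_right (hlamSS a b v hv)
  have hlamW : ∀ (k : ℤ), ∀ v ∈ W k, lam v ∈ W k := by
    intro k
    have h2 : (⨆ (r : ℤ) (s : ℤ) (_ : r + s ≤ k), I r s) ≤ Submodule.comap lam (W k) :=
      iSup_le fun r => iSup_le fun s => iSup_le fun hrs v hv =>
        hSSW r s k (by omega) (hlam r s v hv)
    exact fun v hv => ((hW k).le.trans h2) hv
  -- nilpotency
  have hstep : ∀ (k : ℤ), ∀ v ∈ W k, lam v ∈ W (k - 1) := by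
    intro k
    have h2 : (⨆ (r : ℤ) (s : ℤ) (_ : r + s ≤ k), I r s) ≤ Submodule.comap lam (W (k - 1)) :=
      iSup_le fun r => iSup_le fun s => iSup_le fun hrs v hv =>
        hSSW r s (k - 1) (by omega) (hlam r s v hv)
    exact fun v hv => ((hW k).le.trans h2) hv
  have hnil : IsNilpotent lam := by
    obtain ⟨⟨hmono, ⟨a, ha⟩, ⟨b, hb⟩⟩, _⟩ := hFW
    have hiter : ∀ (m : ℕ), ∀ v, (lam ^ m) v ∈ W (b - m) := by
      intro m
      induction m with
      | zero => intro v; simpa using (by rw [hb]; trivial : v ∈ W b)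
      | succ m ih =>
        intro v
        have h1 := hstep (b - m) _ (ih v)
        rw [pow_succ']
        have h2 : (b : ℤ) - (m : ℤ) - 1 = b - ((m : ℕ) + 1 : ℕ) := by push_cast; ring
        rw [← h2]
        exact h1
    refine ⟨(b - a).toNat, ?_⟩
    ext v
    have h1 := hiter (b - a).toNat v
    have h2 : W (b - ((b - a).toNat : ℤ)) ≤ W a := hmono (by omega)
    have h3 := h2 h1
    rw [ha, Submodule.mem_bot] at h3
    simp [h3]
  set E := expEnd lam with hE
  set E' := expEnd (-lam) with hE'
  have hEE' : E * E' = 1 := expEnd_mul_expEnd_neg lam hnil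
  have hE'E : E' * E = 1 := by
    have h := expEnd_mul_expEnd_neg (-lam) hnil.neg
    rwa [neg_neg] at h
  have hEapp : ∀ v, E (E' v) = v := fun v => by
    rw [← Module.End.mul_apply, hEE', Module.End.one_apply]
  have hE'app : ∀ v, E' (E v) = v := fun v => by
    rw [← Module.End.mul_apply, hE'E, Module.End.one_apply]
  have hsurj : Function.Surjective E := fun v => ⟨E' v, hEapp v⟩
  -- stability under expEnd
  have hpres : ∀ (g : Module.End ℂ V) (U : Submodule ℂ V), (∀ v ∈ U, g v ∈ U) →
      ∀ v ∈ U, expEnd g v ∈ U := by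
    intro g U hg v hv
    have hpow : ∀ j : ℕ, (g ^ j) v ∈ U := by
      intro j
      induction j with
      | zero => simpa using hv
      | succ m ih =>
        rw [pow_succ', Module.End.mul_apply]
        exact hg _ ih
    rw [expEnd]
    simp only [LinearMap.coe_sum, Finset.sum_apply, LinearMap.smul_apply]
    exact Submodule.sum_mem _ fun j _ => U.smul_mem _ (hpow j)
  have hmapstable : ∀ (U : Submodule ℂ V), (∀ v ∈ U, lam v ∈ U) → U.map E = U := by
    intro U hU
    have hUneg : ∀ v ∈ U, (-lam) v ∈ U := fun v hv => by
      simpa using U.neg_mem (hU v hv)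
    apply le_antisymm
    · rintro x hx
      rw [Submodule.mem_map] at hx
      obtain ⟨v, hv, rfl⟩ := hx
      exact hpres lam U hU v hv
    · intro v hv
      rw [Submodule.mem_map]
      exact ⟨E' v, hpres (-lam) U hUneg v hv, hEapp v⟩
  have hmapW : ∀ k, (W k).map E = W k := fun k => hmapstable _ (hlamW k)
  have hmapsup : ∀ a b : ℤ,
      (I a b ⊔ (⨆ (r : ℤ) (_ : r < a) (s : ℤ) (_ : s < b), I r s)).map E
        = I a b ⊔ (⨆ (r : ℤ) (_ : r < a) (s : ℤ) (_ : s < b), I r s) :=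
    fun a b => hmapstable _ (hlamsup a b)
  -- sigma on strictly lower spans
  have hσSS : ∀ (a b : ℤ), ∀ w ∈ (⨆ (r : ℤ) (_ : r < a) (s : ℤ) (_ : s < b), I r s),
      σ w ∈ ⨆ (r : ℤ) (_ : r < b) (s : ℤ) (_ : s < a), I r s := by
    intro a b
    let T : Submodule ℂ V :=
      { carrier := {w | σ w ∈ ⨆ (r : ℤ) (_ : r < b) (s : ℤ) (_ : s < a), I r s}
        add_mem' := fun {x y} hx hy => by
          simp only [Set.mem_setOf_eq, map_add] at *
          exact add_mem hx hy
        zero_mem' := by simp only [Set.mem_setOf_eq, map_zero]; exact zero_mem _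
        smul_mem' := fun c x hx => by
          simp only [Set.mem_setOf_eq, hσ.2] at *
          exact Submodule.smul_mem _ _ hx }
    suffices h : (⨆ (r : ℤ) (_ : r < a) (s : ℤ) (_ : s < b), I r s) ≤ T from fun w hw => h hw
    refine hSle a b T fun r hr s hs w hw => ?_
    show σ w ∈ ⨆ (r : ℤ) (_ : r < b) (s : ℤ) (_ : s < a), I r s
    have h1 := hσI r s w hw
    have h2 : I s r ⊔ (⨆ (r' : ℤ) (_ : r' < s) (s' : ℤ) (_ : s' < r), I r' s')
        ≤ ⨆ (r' : ℤ) (_ : r' < b) (s' : ℤ) (_ : s' < a), I r' s' :=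
      sup_le (hISle hs hr) (hSSmono (by omega) (by omega))
    exact h2 h1
  -- the new bigrading
  have hinternal : DirectSum.IsInternal (fun pq : ℤ × ℤ => (I pq.1 pq.2).map E) := by
    rw [DirectSum.isInternal_submodule_iff_iSupIndep_and_iSup_eq_top]
    constructor
    · let e : V ≃ₗ[ℂ] V := LinearEquiv.ofLinear E E'
        (by rw [← Module.End.mul_eq_comp, hEE', Module.End.one_eq_id])
        (by rw [← Module.End.mul_eq_comp, hE'E, Module.End.one_eq_id])
      have hmapeq : (fun pq : ℤ × ℤ => (I pq.1 pq.2).map E)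
          = fun pq => (Submodule.orderIsoMapComap e) (I pq.1 pq.2) := by
        funext pq
        change _ = Submodule.map (e : V →ₗ[ℂ] V) (I pq.1 pq.2)
        ext x
        simp only [Submodule.mem_map]
        constructor
        · rintro ⟨y, hy, rfl⟩; exact ⟨y, hy, rfl⟩
        · rintro ⟨y, hy, h⟩; exact ⟨y, hy, h⟩
      rw [hmapeq]
      exact (hint.submodule_iSupIndep).map_orderIso _
    · rw [← Submodule.map_iSup, hint.submodule_iSup_eq_top, Submodule.map_top,
        LinearMap.range_eq_top.mpr hsurj]
  have hF' : ∀ p : ℤ, (F p).map E = ⨆ (r : ℤ) (_ : p ≤ r) (s : ℤ), (I r s).map E := by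
    intro p
    rw [hF p]
    simp only [Submodule.map_iSup]
  have hW' : ∀ k : ℤ, W k = ⨆ (r : ℤ) (s : ℤ) (_ : r + s ≤ k), (I r s).map E := by
    intro k
    conv_lhs => rw [← hmapW k, hW k]
    simp only [Submodule.map_iSup]
  have hσ' : ∀ p q : ℤ, ∀ v ∈ (I p q).map E,
      σ v ∈ (I q p).map E ⊔ ⨆ (r : ℤ) (_ : r < q) (s : ℤ) (_ : s < p), (I r s).map E := by
    intro p q v hv
    have hRHS : (I q p).map E ⊔ (⨆ (r : ℤ) (_ : r < q) (s : ℤ) (_ : s < p), (I r s).map E)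
        = I q p ⊔ (⨆ (r : ℤ) (_ : r < q) (s : ℤ) (_ : s < p), I r s) := by
      conv_rhs => rw [← hmapsup q p]
      rw [Submodule.map_sup]
      simp only [Submodule.map_iSup]
    rw [hRHS]
    rw [Submodule.mem_map] at hv
    obtain ⟨u, hu, rfl⟩ := hv
    have hpowSS : ∀ (j : ℕ) w, w ∈ (⨆ (r : ℤ) (_ : r < p) (s : ℤ) (_ : s < q), I r s) →
        (lam ^ j) w ∈ ⨆ (r : ℤ) (_ : r < p) (s : ℤ) (_ : s < q), I r s := by
      intro j
      induction j with
      | zero => intro w hw; simpa using hw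
      | succ m ih =>
        intro w hw
        rw [pow_succ, Module.End.mul_apply]
        exact ih _ (hlamSS p q w hw)
    have hw : E u - u ∈ ⨆ (r : ℤ) (_ : r < p) (s : ℤ) (_ : s < q), I r s := by
      have hEu : E u = (∑ j ∈ Finset.range (Module.finrank ℂ V),
          (((j + 1).factorial : ℂ))⁻¹ • (lam ^ (j + 1)) u) + u := by
        rw [hE, expEnd]
        simp only [LinearMap.coe_sum, Finset.sum_apply, LinearMap.smul_apply]
        rw [Finset.sum_range_succ']
        simp
      rw [hEu, add_sub_cancel_right]
      refine Submodule.sum_mem _ fun j _ => Submodule.smul_mem _ _ ?_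
      rw [pow_succ, Module.End.mul_apply]
      exact hpowSS j _ (hlam p q u hu)
    have hσu := hσI p q u hu
    have hσw : σ (E u - u) ∈ ⨆ (r : ℤ) (_ : r < q) (s : ℤ) (_ : s < p), I r s :=
      hσSS p q _ hw
    have heq : σ (E u) = σ u + σ (E u - u) := by
      rw [← map_add]
      congr 1
      abel
    rw [heq]
    exact add_mem hσu (Submodule.mem_sup_right hσw)
  have hbig : IsDeligneBigrading σ (fun p => (F p).map (expEnd lam)) W
      (fun p q => (I p q).map (expEnd lam)) := ⟨hinternal, hF', hW', hσ'⟩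
  refine ⟨⟨hFW.1, hFW.2.1, ⟨fun i j hij => Submodule.map_mono (hFW.2.2.1.1 hij), ?_, ?_⟩,
    fun k p => bigrading_splitting σ hσ _ W _ hbig k p⟩, hbig, ?_⟩
  · obtain ⟨a, ha⟩ := hFW.2.2.1.2.1
    refine ⟨a, ?_⟩
    show (F a).map E = ⊤
    rw [ha, Submodule.map_top, LinearMap.range_eq_top.mpr hsurj]
  · obtain ⟨b, hb⟩ := hFW.2.2.1.2.2
    refine ⟨b, ?_⟩
    show (F b).map E = ⊥
    rw [hb, Submodule.map_bot]
  · intro Y hY p q v hv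
    rw [Submodule.mem_map] at hv
    obtain ⟨u, hu, rfl⟩ := hv
    show (E * Y * E') (E u) = _
    rw [Module.End.mul_apply, Module.End.mul_apply, hE'app, hY p q u hu, map_smul]
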